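/- Let v, f_1,…,f_m, g, W be as in the context. Then W is twice differentiable on ℝ^m, and for all j ≠ l and all η ∈ ℝ^m the mixed second partial derivative satisfies ∂²W/∂η_j ∂η_l (η) = ∫_{ℝ^d} v''(∑_{i=1}^m η_i f_i(x)) f_j(x) f_l(x) g(x) dx ≤ 0; i.e., W satisfies the logarithmic FKG criterion off the diagonal. -/

import Mathlib

open MeasureTheory

/-- The continuous linear map `η ↦ ∑ i, η i * f i x`. -/
private noncomputable def Lmap (m d : ℕ) (f : Fin m → (Fin d → ℝ) → ℝ)
    (x : Fin d → ℝ) : (Fin m → ℝ) →L[ℝ] ℝ :=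
  ∑ i, f i x • (ContinuousLinearMap.proj i : (Fin m → ℝ) →L[ℝ] ℝ)

private theorem Lmap_apply {m d : ℕ} {f : Fin m → (Fin d → ℝ) → ℝ}
    (x : Fin d → ℝ) (η : Fin m → ℝ) :
    Lmap m d f x η = ∑ i, η i * f i x := by
  simp [Lmap, ContinuousLinearMap.sum_apply, mul_comm]

private theorem Lmap_single {m d : ℕ} {f : Fin m → (Fin d → ℝ) → ℝ}
    (x : Fin d → ℝ) (j : Fin m) :
    Lmap m d f x (Pi.single j 1) = f j x := by
  rw [Lmap_apply]
  simp [Pi.single_apply]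

private theorem Lmap_cont {m d : ℕ} {f : Fin m → (Fin d → ℝ) → ℝ}
    (hfc : ∀ j, Continuous (f j)) : Continuous (Lmap m d f) :=
  continuous_finset_sum _ fun i _ => (hfc i).smul continuous_const

private theorem Lmap_ev_cont {m d : ℕ} {f : Fin m → (Fin d → ℝ) → ℝ}
    (hfc : ∀ j, Continuous (f j)) (η : Fin m → ℝ) :
    Continuous fun x => Lmap m d f x η := by
  simp only [Lmap_apply]
  exact continuous_finset_sum _ fun i _ => continuous_const.mul (hfc i)

/-- Pointwise membership of `Lmap x η` in a compact interval, for `η` in a unit ball. -/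
private theorem Lmap_mem_Icc {m d : ℕ} {f : Fin m → (Fin d → ℝ) → ℝ} {MS : ℝ}
    (hMS : ∀ x, ‖Lmap m d f x‖ ≤ MS) (η₀ : Fin m → ℝ) (x : Fin d → ℝ)
    {η : Fin m → ℝ} (hη : η ∈ Metric.ball η₀ 1) :
    Lmap m d f x η ∈ Set.Icc (-(MS * (‖η₀‖ + 1))) (MS * (‖η₀‖ + 1)) := by
  have hMS0 : 0 ≤ MS := le_trans (norm_nonneg _) (hMS x)
  have h1 : ‖η‖ ≤ ‖η₀‖ + 1 := by
    have h2 : ‖η - η₀‖ < 1 := mem_ball_iff_norm.mp hη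
    calc ‖η‖ = ‖η₀ + (η - η₀)‖ := by ring_nf
      _ ≤ ‖η₀‖ + ‖η - η₀‖ := norm_add_le _ _
      _ ≤ ‖η₀‖ + 1 := by linarith
  have h2 : |Lmap m d f x η| ≤ MS * (‖η₀‖ + 1) := by
    calc |Lmap m d f x η| = ‖Lmap m d f x η‖ := rfl
      _ ≤ ‖Lmap m d f x‖ * ‖η‖ := (Lmap m d f x).le_opNorm η
      _ ≤ MS * (‖η₀‖ + 1) :=
        mul_le_mul (hMS x) h1 (norm_nonneg _) hMS0
  exact abs_le.mp h2

/-- Integrability of the vector-valued integrands. -/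
private theorem aux_int {m d : ℕ} {f : Fin m → (Fin d → ℝ) → ℝ}
    (hfc : ∀ j, Continuous (f j))
    {w : ℝ → ℝ} (hw : Continuous w)
    {h : (Fin d → ℝ) → ℝ} (hhc : Continuous h) (hhs : HasCompactSupport h)
    (η : Fin m → ℝ) :
    Integrable (fun x => (w (Lmap m d f x η) * h x) • Lmap m d f x) := by
  apply Continuous.integrable_of_hasCompactSupport
  · exact ((hw.comp (Lmap_ev_cont hfc η)).mul hhc).smul (Lmap_cont hfc)
  · apply HasCompactSupport.intro hhs
    intro x hx
    simp [image_eq_zero_of_notMem_tsupport hx]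

/-- Differentiation under the integral sign for `η ↦ ∫ u (L x η) * h x`. -/
private theorem auxA {m d : ℕ} {f : Fin m → (Fin d → ℝ) → ℝ}
    (hfc : ∀ j, Continuous (f j)) {MS : ℝ}
    (hMS : ∀ x, ‖Lmap m d f x‖ ≤ MS)
    {u : ℝ → ℝ} (hu : ContDiff ℝ 1 u)
    {h : (Fin d → ℝ) → ℝ} (hhc : Continuous h) (hhs : HasCompactSupport h)
    (η₀ : Fin m → ℝ) :
    HasFDerivAt (fun η : Fin m → ℝ => ∫ x, u (Lmap m d f x η) * h x)
      (∫ x, (deriv u (Lmap m d f x η₀) * h x) • Lmap m d f x) η₀ := by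
  have hMS0 : 0 ≤ MS := le_trans (norm_nonneg _) (hMS 0)
  set R := MS * (‖η₀‖ + 1) with hR
  have hR0 : 0 ≤ R := mul_nonneg hMS0 (by positivity)
  have hu' : Continuous (deriv u) := hu.continuous_deriv le_rfl
  obtain ⟨C, hC⟩ := (isCompact_Icc (a := -R) (b := R)).exists_bound_of_continuousOn
    hu'.continuousOn
  have hC0 : 0 ≤ C := le_trans (norm_nonneg _) (hC 0 (by constructor <;> linarith))
  apply hasFDerivAt_integral_of_dominated_of_fderiv_le
    (F' := fun η x => (deriv u (Lmap m d f x η) * h x) • Lmap m d f x)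
    (bound := fun x => C * |h x| * MS) (Metric.ball_mem_nhds η₀ one_pos)
  · filter_upwards with η
    exact ((hu.continuous.comp (Lmap_ev_cont hfc η)).mul hhc).aestronglyMeasurable
  · apply Continuous.integrable_of_hasCompactSupport
    · exact (hu.continuous.comp (Lmap_ev_cont hfc η₀)).mul hhc
    · exact hhs.mul_left
  · exact (aux_int hfc hu' hhc hhs η₀).aestronglyMeasurable
  · filter_upwards with x η hη
    have hmem := Lmap_mem_Icc hMS η₀ x hη
    have hle : |deriv u (Lmap m d f x η)| ≤ C := hC _ hmem
    calc ‖(deriv u (Lmap m d f x η) * h x) • Lmap m d f x‖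
        = |deriv u (Lmap m d f x η)| * |h x| * ‖Lmap m d f x‖ := by
          rw [norm_smul (deriv u (Lmap m d f x η) * h x) (Lmap m d f x)]
          simp [abs_mul]
      _ ≤ C * |h x| * MS := by
          apply mul_le_mul _ (hMS x) (norm_nonneg _) (by positivity)
          exact mul_le_mul_of_nonneg_right hle (abs_nonneg _)
  · exact ((hhc.abs.integrable_of_hasCompactSupport hhs.abs).const_mul C).mul_const MS
  · filter_upwards with x η _
    have hL' : HasFDerivAt (fun η : Fin m → ℝ => Lmap m d f x η) (Lmap m d f x) η :=
      (Lmap m d f x).hasFDerivAt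
    have hud : HasDerivAt u (deriv u (Lmap m d f x η)) (Lmap m d f x η) :=
      ((hu.differentiable one_ne_zero) _).hasDerivAt
    have := (hud.comp_hasFDerivAt η hL').mul_const (h x)
    have heq2 : h x • deriv u (Lmap m d f x η) • Lmap m d f x
        = (deriv u (Lmap m d f x η) * h x) • Lmap m d f x := by
      rw [smul_smul, mul_comm]
    exact heq2 ▸ this

/-- Continuity of `η ↦ ∫ (w (L x η) * h x) • T x`. -/
private theorem auxC {m d : ℕ} {f : Fin m → (Fin d → ℝ) → ℝ}
    (hfc : ∀ j, Continuous (f j)) {MS : ℝ}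
    (hMS : ∀ x, ‖Lmap m d f x‖ ≤ MS)
    {w : ℝ → ℝ} (hw : Continuous w)
    {h : (Fin d → ℝ) → ℝ} (hhc : Continuous h) (hhs : HasCompactSupport h) :
    Continuous fun η : Fin m → ℝ =>
      ∫ x, (w (Lmap m d f x η) * h x) • Lmap m d f x := by
  rw [continuous_iff_continuousAt]
  intro η₀
  have hMS0 : 0 ≤ MS := le_trans (norm_nonneg _) (hMS 0)
  set R := MS * (‖η₀‖ + 1) with hR
  have hR0 : 0 ≤ R := mul_nonneg hMS0 (by positivity)
  obtain ⟨C, hC⟩ := (isCompact_Icc (a := -R) (b := R)).exists_bound_of_continuousOn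
    hw.continuousOn
  have hC0 : 0 ≤ C := le_trans (norm_nonneg _) (hC 0 (by constructor <;> linarith))
  apply continuousAt_of_dominated (bound := fun x => C * |h x| * MS)
  · filter_upwards with η
    exact (aux_int hfc hw hhc hhs η).aestronglyMeasurable
  · filter_upwards [Metric.ball_mem_nhds η₀ one_pos] with η hη
    filter_upwards with x
    have hmem := Lmap_mem_Icc hMS η₀ x hη
    have hle : |w (Lmap m d f x η)| ≤ C := hC _ hmem
    calc ‖(w (Lmap m d f x η) * h x) • Lmap m d f x‖
        = |w (Lmap m d f x η)| * |h x| * ‖Lmap m d f x‖ := by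
          rw [norm_smul (w (Lmap m d f x η) * h x) (Lmap m d f x)]
          simp [abs_mul]
      _ ≤ C * |h x| * MS := by
          apply mul_le_mul _ (hMS x) (norm_nonneg _)
            (mul_nonneg hC0 (abs_nonneg _))
          exact mul_le_mul_of_nonneg_right hle (abs_nonneg _)
  · exact ((hhc.abs.integrable_of_hasCompactSupport hhs.abs).const_mul C).mul_const MS
  · filter_upwards with x
    exact (((hw.comp (Lmap m d f x).continuous).mul continuous_const).smul
      continuous_const).continuousAt

/-- the lattice energy `W(η) = ∫ v(∑_j η_j f_j(x)) g(x) dx` is twice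
(continuously) differentiable, and for `j ≠ l` its mixed second partial derivative
equals `∫ v''(∑_i η_i f_i(x)) f_j(x) f_l(x) g(x) dx ≤ 0` (logarithmic FKG
criterion off the diagonal, equation (3.12) of the paper). -/
theorem lattice_energy_mixed_partials_nonpos
    (d m : ℕ) (hm : 1 ≤ m)
    (v : ℝ → ℝ) (hv : ContDiff ℝ 2 v) (hv0 : v 0 = 0)
    (b : ℝ) (hb : 0 < b) (hv' : ∀ t, |deriv v t| ≤ b)
    (hv'' : ∀ t, deriv (deriv v) t ≤ 0)
    (f : Fin m → (Fin d → ℝ) → ℝ) (hf0 : ∀ j x, 0 ≤ f j x)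
    (hfc : ∀ j, Continuous (f j)) (hfs : ∀ j, HasCompactSupport (f j))
    (g : (Fin d → ℝ) → ℝ) (hg0 : ∀ x, 0 ≤ g x)
    (hgc : Continuous g) (hgs : HasCompactSupport g)
    (W : (Fin m → ℝ) → ℝ)
    (hW : ∀ η, W η = ∫ x, v (∑ j, η j * f j x) * g x) :
    ContDiff ℝ 2 W ∧
      ∀ j l : Fin m, j ≠ l → ∀ η : Fin m → ℝ,
        (fderiv ℝ (fun η' => fderiv ℝ W η' (Pi.single j 1)) η) (Pi.single l 1)
            = ∫ x, deriv (deriv v) (∑ i, η i * f i x) * (f j x * f l x * g x) ∧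
          (fderiv ℝ (fun η' => fderiv ℝ W η' (Pi.single j 1)) η) (Pi.single l 1) ≤ 0 := by
  classical
  -- regularity of v
  have h21 : (2 : WithTop ℕ∞) = (1 : ℕ) + 1 := by norm_num
  have hv1 : ContDiff ℝ 1 (deriv v) := by
    rw [h21, contDiff_succ_iff_deriv] at hv
    exact_mod_cast hv.2.2
  have hvD : Differentiable ℝ v := by
    rw [h21, contDiff_succ_iff_deriv] at hv
    exact hv.1
  have hvC1 : ContDiff ℝ 1 v := by
    rw [h21] at hv; exact hv.of_le (by exact_mod_cast le_of_lt (by norm_num))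
  have hv2c : Continuous (deriv (deriv v)) := hv1.continuous_deriv le_rfl
  -- a uniform bound on the operator norms of `Lmap`
  have hMex : ∀ i : Fin m, ∃ Mi : ℝ, ∀ x, |f i x| ≤ Mi := by
    intro i
    obtain ⟨K, hK⟩ := (hfs i).exists_bound_of_continuous (hfc i)
    exact ⟨K, fun x => by simpa using hK x⟩
  choose M hM using hMex
  set MS : ℝ := ∑ i, M i with hMSdef
  have hMnn : ∀ i, 0 ≤ M i := fun i => le_trans (abs_nonneg _) (hM i 0)
  have hMS : ∀ x, ‖Lmap m d f x‖ ≤ MS := by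
    intro x
    apply ContinuousLinearMap.opNorm_le_bound _ (Finset.sum_nonneg fun i _ => hMnn i)
    intro ξ
    rw [Lmap_apply]
    calc ‖∑ i, ξ i * f i x‖ ≤ ∑ i, ‖ξ i * f i x‖ := norm_sum_le _ _
      _ ≤ ∑ i : Fin m, M i * ‖ξ‖ := by
          apply Finset.sum_le_sum
          intro i _
          rw [norm_mul, mul_comm]
          exact mul_le_mul (hM i x) (norm_le_pi_norm ξ i) (norm_nonneg _) (hMnn i)
      _ = MS * ‖ξ‖ := by rw [hMSdef, Finset.sum_mul]
  -- W as a parametric integral through Lmap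
  have hWeq : W = fun η => ∫ x, v (Lmap m d f x η) * g x := by
    funext η
    rw [hW η]
    simp only [Lmap_apply]
  have hWderiv : ∀ η₀, HasFDerivAt W
      (∫ x, (deriv v (Lmap m d f x η₀) * g x) • Lmap m d f x) η₀ := by
    intro η₀
    rw [hWeq]
    exact auxA hfc hMS hvC1 hgc hgs η₀
  have happly : ∀ η (y : Fin m → ℝ), fderiv ℝ W η y
      = ∫ x, deriv v (Lmap m d f x η) * (g x * Lmap m d f x y) := by
    intro η y
    rw [(hWderiv η).fderiv,
      ContinuousLinearMap.integral_apply (aux_int hfc (hvC1.continuous_deriv le_rfl) hgc hgs η)]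
    congr 1
    funext x
    simp [mul_assoc]
  refine ⟨?_, ?_⟩
  · -- ContDiff ℝ 2 W
    rw [h21, contDiff_succ_iff_fderiv_apply]
    refine ⟨fun η => (hWderiv η).differentiableAt, by simp, ?_⟩
    intro y
    have heyc : Continuous fun x => Lmap m d f x y := Lmap_ev_cont hfc y
    have hhc : Continuous fun x => g x * Lmap m d f x y := hgc.mul heyc
    have hhs : HasCompactSupport fun x => g x * Lmap m d f x y := hgs.mul_right
    have hΦ : (fun η => fderiv ℝ W η y)
        = fun η => ∫ x, deriv v (Lmap m d f x η) * (g x * Lmap m d f x y) :=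
      funext fun η => happly η y
    rw [hΦ, Nat.cast_one, contDiff_one_iff_fderiv]
    have hD : ∀ η₀, HasFDerivAt
        (fun η => ∫ x, deriv v (Lmap m d f x η) * (g x * Lmap m d f x y))
        (∫ x, (deriv (deriv v) (Lmap m d f x η₀) * (g x * Lmap m d f x y)) • Lmap m d f x)
        η₀ := fun η₀ => auxA hfc hMS hv1 hhc hhs η₀
    refine ⟨fun η => (hD η).differentiableAt, ?_⟩
    have : fderiv ℝ (fun η => ∫ x, deriv v (Lmap m d f x η) * (g x * Lmap m d f x y))
        = fun η₀ => ∫ x,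
            (deriv (deriv v) (Lmap m d f x η₀) * (g x * Lmap m d f x y)) • Lmap m d f x :=
      funext fun η₀ => (hD η₀).fderiv
    rw [this]
    exact auxC hfc hMS hv2c hhc hhs
  · -- mixed partial derivatives
    intro j l hjl η
    have hhc : Continuous fun x => f j x * g x := (hfc j).mul hgc
    have hhs : HasCompactSupport fun x => f j x * g x := hgs.mul_left
    have heq : (fun η' => fderiv ℝ W η' (Pi.single j 1))
        = fun η' => ∫ x, deriv v (Lmap m d f x η') * (f j x * g x) := by
      funext η'
      rw [happly η' (Pi.single j 1)]
      congr 1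
      funext x
      rw [Lmap_single]
      ring
    have hD : HasFDerivAt (fun η' => ∫ x, deriv v (Lmap m d f x η') * (f j x * g x))
        (∫ x, (deriv (deriv v) (Lmap m d f x η) * (f j x * g x)) • Lmap m d f x) η :=
      auxA hfc hMS hv1 hhc hhs η
    have hEq : (fderiv ℝ (fun η' => fderiv ℝ W η' (Pi.single j 1)) η) (Pi.single l 1)
        = ∫ x, deriv (deriv v) (∑ i, η i * f i x) * (f j x * f l x * g x) := by
      rw [heq, hD.fderiv,
        ContinuousLinearMap.integral_apply (aux_int hfc hv2c hhc hhs η)]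
      congr 1
      funext x
      rw [ContinuousLinearMap.smul_apply, smul_eq_mul, Lmap_single, Lmap_apply]
      ring
    refine ⟨hEq, ?_⟩
    rw [hEq]
    apply integral_nonpos
    intro x
    have h1 : deriv (deriv v) (∑ i, η i * f i x) ≤ 0 := hv'' _
    have h2 : 0 ≤ f j x * f l x * g x := by
      have := hf0 j x; have := hf0 l x; have := hg0 x; positivity
    exact mul_nonpos_iff.mpr (Or.inr ⟨h1, h2⟩)
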